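/- Line Search Shift is consistent: for every mode x⋆ of f and every point x₀ in the basin of attraction of x⋆, there exists ρ₀ > 0 such that for every 0 < ρ ≤ ρ₀, every Line Search Shift sequence with parameter ρ started at x₀ converges to x⋆. Moreover, if κ₂ρ ≤ 1/2 (κ₂ = sup_x ‖∇²f(x)‖), then along any such sequence, until a critical point is reached one has (ρ/2)‖∇f(x_k)‖ ≤ ‖x_{k+1} − x_k‖ ≤ ρκ₁, where κ₁ = sup_x ‖∇f(x)‖. -/

import Mathlib

open Metric Set Filter MeasureTheory Topology
open scoped Topology RealInnerProductSpace

abbrev Euc (d : ℕ) := EuclideanSpace ℝ (Fin d)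

/-- The Hessian of `f`, as the derivative of the gradient field. -/
noncomputable def hess {d : ℕ} (f : Euc d → ℝ) (x : Euc d) : Euc d →L[ℝ] Euc d :=
  fderiv ℝ (gradient f) x

/-- The standing assumptions on the density `f`: nonnegative, integrable, vanishing at
infinity, twice differentiable with bounded and uniformly continuous zeroth, first and
second derivatives, and Morse (nonsingular Hessian at every critical point). -/
def IsNiceDensity {d : ℕ} (f : Euc d → ℝ) : Prop :=
  (∀ x, 0 ≤ f x) ∧
  Integrable f volume ∧
  Tendsto f (cocompact (Euc d)) (𝓝 0) ∧
  Differentiable ℝ f ∧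
  Differentiable ℝ (gradient f) ∧
  (∃ M, ∀ x, |f x| ≤ M) ∧
  (∃ M, ∀ x, ‖gradient f x‖ ≤ M) ∧
  (∃ M, ∀ x, ‖hess f x‖ ≤ M) ∧
  UniformContinuous f ∧
  UniformContinuous (gradient f) ∧
  UniformContinuous (hess f) ∧
  (∀ x, gradient f x = 0 → Function.Bijective (hess f x))

/-- `γ` is the gradient ascent curve of `f` starting at `x`, defined on `[0, ∞)`. -/
def IsGradFlow {d : ℕ} (f : Euc d → ℝ) (x : Euc d) (γ : ℝ → Euc d) : Prop :=
  γ 0 = x ∧ ∀ t ∈ Ici (0:ℝ), HasDerivWithinAt γ (gradient f (γ t)) (Ici 0) t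

/-- A Line Search Shift sequence with parameter `ρ` started at `x₀`: at each step one moves by
`ρ_k ∇f(x_k)` where `ρ_k ∈ [0, ρ]` maximizes `r ↦ f(x_k + r ∇f(x_k))` over `[0, ρ]`. -/
def IsLineSearchShiftSeq {d : ℕ} (f : Euc d → ℝ) (ρ : ℝ) (x₀ : Euc d) (x : ℕ → Euc d) :
    Prop :=
  x 0 = x₀ ∧ ∀ k : ℕ, ∃ ρk ∈ Icc (0:ℝ) ρ,
    x (k+1) = x k + ρk • gradient f (x k) ∧
    ∀ r ∈ Icc (0:ℝ) ρ, f (x k + r • gradient f (x k)) ≤ f (x (k+1))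

section Aux
variable {d : ℕ} {f : Euc d → ℝ}

lemma hasDerivAt_line (hdf : Differentiable ℝ f) (x v : Euc d) (s : ℝ) :
    HasDerivAt (fun s : ℝ => f (x + s • v)) ⟪gradient f (x + s • v), v⟫ s := by
  have h1 : HasFDerivAt f ((InnerProductSpace.toDual ℝ (Euc d)) (gradient f (x + s • v)))
      (x + s • v) := (hdf (x + s • v)).hasGradientAt
  have h2 : HasDerivAt (fun s : ℝ => x + s • v) v s := by
    simpa using ((hasDerivAt_id s).smul_const v).const_add x
  simpa [Function.comp_def] using h1.comp_hasDerivAt s h2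

lemma grad_lipschitz (hdg : Differentiable ℝ (gradient f)) {L : ℝ} (hL : 0 ≤ L)
    (hb : ∀ z, ‖hess f z‖ ≤ L) (x y : Euc d) :
    ‖gradient f x - gradient f y‖ ≤ L * ‖x - y‖ := by
  have h := lipschitzWith_of_nnnorm_fderiv_le (𝕜 := ℝ) hdg (C := L.toNNReal) (fun z => by
    rw [← Real.toNNReal_coe (r := ‖fderiv ℝ (gradient f) z‖₊)]
    exact Real.toNNReal_le_toNNReal (hb z))
  simpa [dist_eq_norm, Real.coe_toNNReal L hL] using h.dist_le_mul x y

lemma le_of_hasDerivAt_nonneg {u u' : ℝ → ℝ} (hu : ∀ s, HasDerivAt u (u' s) s)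
    (h' : ∀ s, 0 < s → 0 ≤ u' s) {s : ℝ} (hs : 0 ≤ s) : u 0 ≤ u s := by
  have hmono : MonotoneOn u (Ici 0) := by
    apply monotoneOn_of_deriv_nonneg (convex_Ici 0)
      (Continuous.continuousOn (by
        exact (fun t => (hu t).differentiableAt) |> Differentiable.continuous))
      (fun t ht => ((hu t).differentiableAt).differentiableWithinAt)
      (fun t ht => by
        rw [interior_Ici] at ht
        rw [(hu t).deriv]; exact h' t ht)
  exact hmono (mem_Ici.2 le_rfl) hs hs

/-- Taylor sandwich along a line. -/
lemma taylor_lower (hdf : Differentiable ℝ f) (hdg : Differentiable ℝ (gradient f))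
    {L : ℝ} (hL : 0 ≤ L) (hb : ∀ z, ‖hess f z‖ ≤ L) (x v : Euc d) {s : ℝ} (hs : 0 ≤ s) :
    f x + s * ⟪gradient f x, v⟫ - L * s ^ 2 * ‖v‖ ^ 2 / 2 ≤ f (x + s • v) := by
  have key : ∀ t : ℝ, 0 < t →
      |⟪gradient f (x + t • v), v⟫ - ⟪gradient f x, v⟫| ≤ L * t * ‖v‖ ^ 2 := by
    intro t ht
    rw [← inner_sub_left]
    calc |⟪gradient f (x + t • v) - gradient f x, v⟫|
        ≤ ‖gradient f (x + t • v) - gradient f x‖ * ‖v‖ := abs_real_inner_le_norm _ _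
      _ ≤ L * ‖x + t • v - x‖ * ‖v‖ := by
          gcongr; exact grad_lipschitz hdg hL hb _ _
      _ = L * t * ‖v‖ ^ 2 := by
          rw [add_sub_cancel_left, norm_smul, Real.norm_eq_abs, abs_of_pos ht]; ring
  -- u s := f (x + s•v) - s * ⟪g x, v⟫ + L*‖v‖^2/2 * s^2 is monotone on [0,∞)
  have hu : ∀ t : ℝ, HasDerivAt
      (fun t : ℝ => f (x + t • v) - t * ⟪gradient f x, v⟫ + L * ‖v‖ ^ 2 / 2 * t ^ 2)
      (⟪gradient f (x + t • v), v⟫ - ⟪gradient f x, v⟫ + L * ‖v‖ ^ 2 / 2 * (2 * t)) t := by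
    intro t
    have h1 := hasDerivAt_line hdf x v t
    have h2 : HasDerivAt (fun t : ℝ => t * ⟪gradient f x, v⟫) ⟪gradient f x, v⟫ t := by
      simpa using (hasDerivAt_id t).mul_const ⟪gradient f x, v⟫
    have h3 : HasDerivAt (fun t : ℝ => L * ‖v‖ ^ 2 / 2 * t ^ 2) (L * ‖v‖ ^ 2 / 2 * (2 * t)) t := by
      simpa [mul_comm] using (hasDerivAt_pow 2 t).const_mul (L * ‖v‖ ^ 2 / 2)
    exact (h1.sub h2).add h3
  have := le_of_hasDerivAt_nonneg hu (fun t ht => by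
    have := key t ht
    have h2 := abs_le.1 this
    nlinarith [h2.1]) hs
  simp only [zero_smul, add_zero, zero_mul, sub_zero, zero_pow, mul_zero] at this
  nlinarith [this]

lemma taylor_upper (hdf : Differentiable ℝ f) (hdg : Differentiable ℝ (gradient f))
    {L : ℝ} (hL : 0 ≤ L) (hb : ∀ z, ‖hess f z‖ ≤ L) (x v : Euc d) {s : ℝ} (hs : 0 ≤ s) :
    f (x + s • v) ≤ f x + s * ⟪gradient f x, v⟫ + L * s ^ 2 * ‖v‖ ^ 2 / 2 := by
  have key : ∀ t : ℝ, 0 < t →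
      |⟪gradient f (x + t • v), v⟫ - ⟪gradient f x, v⟫| ≤ L * t * ‖v‖ ^ 2 := by
    intro t ht
    rw [← inner_sub_left]
    calc |⟪gradient f (x + t • v) - gradient f x, v⟫|
        ≤ ‖gradient f (x + t • v) - gradient f x‖ * ‖v‖ := abs_real_inner_le_norm _ _
      _ ≤ L * ‖x + t • v - x‖ * ‖v‖ := by
          gcongr; exact grad_lipschitz hdg hL hb _ _
      _ = L * t * ‖v‖ ^ 2 := by
          rw [add_sub_cancel_left, norm_smul, Real.norm_eq_abs, abs_of_pos ht]; ring
  have hu : ∀ t : ℝ, HasDerivAt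
      (fun t : ℝ => t * ⟪gradient f x, v⟫ + L * ‖v‖ ^ 2 / 2 * t ^ 2 - f (x + t • v))
      (⟪gradient f x, v⟫ + L * ‖v‖ ^ 2 / 2 * (2 * t) - ⟪gradient f (x + t • v), v⟫) t := by
    intro t
    have h1 := hasDerivAt_line hdf x v t
    have h2 : HasDerivAt (fun t : ℝ => t * ⟪gradient f x, v⟫) ⟪gradient f x, v⟫ t := by
      simpa using (hasDerivAt_id t).mul_const ⟪gradient f x, v⟫
    have h3 : HasDerivAt (fun t : ℝ => L * ‖v‖ ^ 2 / 2 * t ^ 2) (L * ‖v‖ ^ 2 / 2 * (2 * t)) t := by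
      simpa [mul_comm] using (hasDerivAt_pow 2 t).const_mul (L * ‖v‖ ^ 2 / 2)
    exact (h2.add h3).sub h1
  have := le_of_hasDerivAt_nonneg hu (fun t ht => by
    have h2 := abs_le.1 (key t ht)
    nlinarith [h2.2]) hs
  simp only [zero_smul, add_zero, zero_mul, sub_zero, zero_pow, mul_zero, zero_add,
    zero_sub, neg_le_sub_iff_le_add] at this
  nlinarith [this]

/-- If `s` maximizes `f` along the gradient ray better than `ρ` does, `s ≥ ρ/2`. -/
lemma stepsize_ge (hdf : Differentiable ℝ f) (hdg : Differentiable ℝ (gradient f))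
    {L : ℝ} (hL : 0 ≤ L) (hb : ∀ z, ‖hess f z‖ ≤ L) {x : Euc d} {ρ s : ℝ}
    (hρ : 0 < ρ) (hs : s ∈ Icc 0 ρ) (hLρ : L * ρ ≤ 1 / 2)
    (hg : gradient f x ≠ 0)
    (hmax : f (x + ρ • gradient f x) ≤ f (x + s • gradient f x)) :
    ρ / 2 ≤ s := by
  set g := gradient f x with hgdef
  have hG : 0 < ‖g‖ ^ 2 := by have : 0 < ‖g‖ := norm_pos_iff.mpr hg; positivity
  have h1 := taylor_lower hdf hdg hL hb x g hρ.le
  have h2 := taylor_upper hdf hdg hL hb x g hs.1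
  rw [real_inner_self_eq_norm_sq] at h1 h2
  -- ρ‖g‖² - Lρ²‖g‖²/2 ≤ s‖g‖² + Ls²‖g‖²/2
  have h3 : ρ * ‖g‖ ^ 2 - L * ρ ^ 2 * ‖g‖ ^ 2 / 2 ≤ s * ‖g‖ ^ 2 + L * s ^ 2 * ‖g‖ ^ 2 / 2 := by
    nlinarith [hmax, h1, h2]
  have h4 : ρ - L * ρ ^ 2 / 2 ≤ s + L * s ^ 2 / 2 := by
    have := mul_le_mul_of_nonneg_right (le_refl (0:ℝ)) (le_refl (0:ℝ))
    nlinarith [h3, hG]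
  nlinarith [h4, hs.1, hs.2, mul_le_mul_of_nonneg_right hLρ hs.1, hρ.le,
    mul_nonneg hL hs.1]
lemma gradient_eq_zero_of_localMax {xstar : Euc d} (hmode : IsLocalMax f xstar) :
    gradient f xstar = 0 := by
  unfold gradient
  rw [hmode.fderiv_eq_zero]; simp

lemma hess_symm (hdf : Differentiable ℝ f) (hdg : Differentiable ℝ (gradient f))
    (x : Euc d) (v w : Euc d) : ⟪hess f x v, w⟫ = ⟪hess f x w, v⟫ := by
  set e : Euc d ≃L[ℝ] (Euc d →L[ℝ] ℝ) :=
    (InnerProductSpace.toDual ℝ (Euc d)).toContinuousLinearEquiv with he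
  have hf' : ∀ y, HasFDerivAt f ((fun y => (e : Euc d →L[ℝ] (Euc d →L[ℝ] ℝ)) (gradient f y)) y) y :=
    fun y => (hdf y).hasGradientAt
  have hgrad : HasFDerivAt (gradient f) (hess f x) x := (hdg x).hasFDerivAt
  have hx : HasFDerivAt (fun y => (e : Euc d →L[ℝ] (Euc d →L[ℝ] ℝ)) (gradient f y))
      (((e : Euc d →L[ℝ] (Euc d →L[ℝ] ℝ))).comp (hess f x)) x :=
    ((e : Euc d →L[ℝ] (Euc d →L[ℝ] ℝ)).hasFDerivAt).comp x hgrad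
  have := second_derivative_symmetric hf' hx v w
  simpa [e, InnerProductSpace.toDual_apply_apply] using this

lemma hess_nonpos_at_max (hdf : Differentiable ℝ f) (hdg : Differentiable ℝ (gradient f))
    {xstar : Euc d} (hmode : IsLocalMax f xstar) (v : Euc d) :
    ⟪hess f xstar v, v⟫ ≤ 0 := by
  by_contra hpos
  push_neg at hpos
  have hgrad0 : gradient f xstar = 0 := gradient_eq_zero_of_localMax hmode
  have hc : HasDerivAt (fun t : ℝ => gradient f (xstar + t • v)) (hess f xstar v) 0 := by
    have hgrad : HasFDerivAt (gradient f) (hess f xstar) (xstar + (0:ℝ) • v) := by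
      simpa [hess] using (hdg xstar).hasFDerivAt
    have h2 : HasDerivAt (fun t : ℝ => xstar + t • v) v 0 := by
      simpa using ((hasDerivAt_id (0:ℝ)).smul_const v).const_add xstar
    exact hgrad.comp_hasDerivAt (0:ℝ) h2
  have hψ : HasDerivAt (fun t : ℝ => ⟪gradient f (xstar + t • v), v⟫)
      ⟪hess f xstar v, v⟫ 0 := by
    have := hc.inner (𝕜 := ℝ) (hasDerivAt_const (0:ℝ) v)
    simpa [hgrad0] using this
  set ψ : ℝ → ℝ := fun t => ⟪gradient f (xstar + t • v), v⟫ with hψdef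
  have hψ0 : ψ 0 = 0 := by simp only [ψ, zero_smul, add_zero, hgrad0, inner_zero_left]
  -- slope of ψ tends to a positive number, so ψ > 0 on a right interval
  have hslope : Tendsto (slope ψ 0) (𝓝[≠] 0) (𝓝 ⟪hess f xstar v, v⟫) :=
    hasDerivAt_iff_tendsto_slope.1 hψ
  have hev : ∀ᶠ t in 𝓝[>] (0:ℝ), 0 < slope ψ 0 t :=
    (hslope.mono_left (nhdsWithin_mono 0 (fun t ht => by
      simp only [mem_compl_iff, mem_singleton_iff]
      exact ne_of_gt ht))).eventually (eventually_gt_nhds hpos)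
  obtain ⟨t₀, ht₀, hIoc⟩ := mem_nhdsGT_iff_exists_Ioc_subset.1 hev
  -- local max gives an interval where f(xstar + t v) ≤ f xstar
  have hcont : Continuous fun t : ℝ => xstar + t • v := by continuity
  have hmax' : ∀ᶠ t : ℝ in 𝓝 0, f (xstar + t • v) ≤ f xstar := by
    have h0 : Tendsto (fun t : ℝ => xstar + t • v) (𝓝 0) (𝓝 xstar) := by
      have := hcont.tendsto 0
      simpa using this
    exact h0.eventually hmode
  obtain ⟨ε, hε, hball⟩ := Metric.eventually_nhds_iff.1 hmax'
  set t₁ : ℝ := min t₀ (ε / 2) with ht₁def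
  have ht₁ : 0 < t₁ := lt_min ht₀ (by positivity)
  -- ψ > 0 on (0, t₁]
  have hψpos : ∀ t ∈ Ioo (0:ℝ) t₁, 0 < ψ t := by
    intro t ht
    have hmem : t ∈ Ioc (0:ℝ) t₀ := ⟨ht.1, le_trans ht.2.le (min_le_left _ _)⟩
    have := hIoc hmem
    have hslope_eq : slope ψ 0 t = ψ t / t := by
      rw [slope_def_field, hψ0]; simp only [sub_zero]
    rw [Set.mem_setOf_eq, hslope_eq] at this
    exact (div_pos_iff.1 this).resolve_right (fun h => absurd ht.1 (not_lt.2 h.2.le)) |>.1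
  -- f(xstar + t v) is strictly increasing on [0, t₁]
  have hsm : StrictMonoOn (fun t : ℝ => f (xstar + t • v)) (Icc 0 t₁) := by
    apply strictMonoOn_of_deriv_pos (convex_Icc 0 t₁)
      ((by have := hdf.continuous; fun_prop : Continuous fun t : ℝ => f (xstar + t • v)).continuousOn)
    intro t ht
    rw [interior_Icc] at ht
    rw [(hasDerivAt_line hdf xstar v t).deriv]
    exact hψpos t ht
  have h1 : f (xstar + (0:ℝ) • v) < f (xstar + t₁ • v) :=
    hsm (left_mem_Icc.2 ht₁.le) (right_mem_Icc.2 ht₁.le) ht₁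
  have h2 : f (xstar + t₁ • v) ≤ f xstar := by
    apply hball
    rw [Real.dist_eq, sub_zero, abs_of_pos ht₁]
    calc t₁ ≤ ε / 2 := min_le_right _ _
      _ < ε := by linarith
  simp only [zero_smul, add_zero] at h1
  linarith
lemma exists_negdef (hd : 0 < d) {xstar : Euc d}
    (hsymm : ∀ v w : Euc d, ⟪hess f xstar v, w⟫ = ⟪hess f xstar w, v⟫)
    (hnonpos : ∀ v : Euc d, ⟪hess f xstar v, v⟫ ≤ 0)
    (hbij : Function.Bijective (hess f xstar)) :
    ∃ a > (0:ℝ), ∀ v : Euc d, ⟪hess f xstar v, v⟫ ≤ -a * ‖v‖ ^ 2 := by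
  set H := hess f xstar with hH
  set Q : Euc d → ℝ := fun v => ⟪H v, v⟫ with hQ
  have hQcont : Continuous Q := Continuous.inner (H.continuous) continuous_id
  have hv₀ : EuclideanSpace.single (⟨0, hd⟩ : Fin d) (1:ℝ) ∈ sphere (0:Euc d) 1 := by
    simp [EuclideanSpace.norm_single]
  obtain ⟨v₁, hv₁mem, hv₁max⟩ := (isCompact_sphere (0:Euc d) 1).exists_isMaxOn
    ⟨_, hv₀⟩ hQcont.continuousOn
  have hv₁norm : ‖v₁‖ = 1 := by simpa using hv₁mem
  refine ⟨-Q v₁, ?_, ?_⟩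
  · rcases lt_or_eq_of_le (hnonpos v₁) with h | h
    · linarith
    · exfalso
      have hzero : ∀ w : Euc d, ⟪H v₁, w⟫ = 0 := by
        intro w
        have hkey : ∀ t : ℝ, 2 * t * ⟪H v₁, w⟫ + t ^ 2 * ⟪H w, w⟫ ≤ 0 := by
          intro t
          have hg := hnonpos (v₁ + t • w)
          have e1 : H (v₁ + t • w) = H v₁ + t • H w := by
            rw [map_add, _root_.map_smul]
          have hexp : ⟪H (v₁ + t • w), v₁ + t • w⟫
              = ⟪H v₁, v₁⟫ + 2 * t * ⟪H v₁, w⟫ + t ^ 2 * ⟪H w, w⟫ := by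
            rw [e1, inner_add_left, inner_add_right, inner_add_right,
              real_inner_smul_left, real_inner_smul_left, real_inner_smul_right,
              real_inner_smul_right, hsymm w v₁]
            ring
          rw [hexp] at hg
          linarith [hg, le_of_eq h, ge_of_eq h]
        set c := ⟪H v₁, w⟫ with hc
        set q := ⟪H w, w⟫ with hq
        have hqle : q ≤ 0 := hnonpos w
        by_contra hcne
        have h1q : (0:ℝ) < 1 - q := by linarith
        have hcsq : (0:ℝ) < c ^ 2 :=
          lt_of_le_of_ne (sq_nonneg c) (Ne.symm (pow_ne_zero 2 hcne))
        have h2 := hkey (c * (1 - q)⁻¹)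
        have h3 := mul_le_mul_of_nonneg_right h2
          (le_of_lt (by positivity : (0:ℝ) < (1 - q) ^ 2))
        rw [zero_mul] at h3
        have hid : (2 * (c * (1 - q)⁻¹) * c + (c * (1 - q)⁻¹) ^ 2 * q) * (1 - q) ^ 2
            = 2 * c ^ 2 * (1 - q) + c ^ 2 * q := by
          field_simp
        rw [hid] at h3
        nlinarith [h3, mul_pos hcsq (show (0:ℝ) < 2 - q by linarith)]
      have hHv₁ : H v₁ = 0 := inner_self_eq_zero.1 (hzero (H v₁))
      have : v₁ = 0 := hbij.1 (by simpa [map_zero] using hHv₁)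
      rw [this] at hv₁norm
      simp at hv₁norm
  · intro v
    rcases eq_or_ne v 0 with rfl | hv
    · simp
    · have hvn : 0 < ‖v‖ := norm_pos_iff.2 hv
      set u : Euc d := ‖v‖⁻¹ • v with hu
      have hus : u ∈ sphere (0:Euc d) 1 := by
        simp [hu, norm_smul, abs_of_pos (inv_pos.2 hvn), inv_mul_cancel₀ hvn.ne']
      have hQu : Q u ≤ Q v₁ := hv₁max hus
      have hv' : ‖v‖ • u = v := by
        rw [hu, smul_smul, mul_inv_cancel₀ hvn.ne', one_smul]
      have hscale : Q v = ‖v‖ ^ 2 * Q u := by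
        conv_lhs => rw [← hv']
        show ⟪H (‖v‖ • u), ‖v‖ • u⟫ = _
        rw [_root_.map_smul, real_inner_smul_left, real_inner_smul_right]
        ring
      show Q v ≤ - -Q v₁ * ‖v‖ ^ 2
      rw [hscale]
      calc ‖v‖ ^ 2 * Q u ≤ ‖v‖ ^ 2 * Q v₁ :=
            mul_le_mul_of_nonneg_left hQu (by positivity)
        _ = - -Q v₁ * ‖v‖ ^ 2 := by ring
set_option synthInstance.maxHeartbeats 400000 in
/-- Strong local concavity near a nondegenerate local max. -/
lemma exists_concave_ball (hdg : Differentiable ℝ (gradient f)) {xstar : Euc d}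
    (hgrad0 : gradient f xstar = 0) (hHcont : Continuous (hess f))
    {a : ℝ} (ha : 0 < a)
    (hneg : ∀ v : Euc d, ⟪hess f xstar v, v⟫ ≤ -a * ‖v‖ ^ 2) :
    ∃ r > (0:ℝ), ∀ x ∈ closedBall xstar r,
      ⟪gradient f x, x - xstar⟫ ≤ -(a / 2) * ‖x - xstar‖ ^ 2 := by
  obtain ⟨r, hr, hball⟩ : ∃ r > (0:ℝ), ∀ z ∈ closedBall xstar r,
      ‖hess f z - hess f xstar‖ ≤ a / 2 := by
    have := Metric.continuousAt_iff.1 (hHcont.continuousAt (x := xstar)) (a/2) (by positivity)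
    obtain ⟨δ, hδ, hδ'⟩ := this
    exact ⟨δ/2, by positivity, fun z hz => by
      have : dist z xstar < δ := lt_of_le_of_lt (mem_closedBall.1 hz) (by linarith)
      simpa [dist_eq_norm] using (hδ' this).le⟩
  refine ⟨r, hr, fun x hx => ?_⟩
  have hmvt := Convex.norm_image_sub_le_of_norm_fderiv_le'
    (f := gradient f) (φ := hess f xstar) (s := closedBall xstar r) (C := a/2)
    (fun z _ => hdg z) (fun z hz => hball z hz) (convex_closedBall _ _)
    (mem_closedBall_self hr.le) hx
  rw [hgrad0, sub_zero] at hmvt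
  have h1 : ⟪gradient f x, x - xstar⟫
      = ⟪hess f xstar (x - xstar), x - xstar⟫
        + ⟪gradient f x - hess f xstar (x - xstar), x - xstar⟫ := by
    rw [← inner_add_left, add_sub_cancel]
  rw [h1]
  have h2 : ⟪gradient f x - hess f xstar (x - xstar), x - xstar⟫
      ≤ a / 2 * ‖x - xstar‖ ^ 2 := by
    calc ⟪gradient f x - hess f xstar (x - xstar), x - xstar⟫
        ≤ ‖gradient f x - hess f xstar (x - xstar)‖ * ‖x - xstar‖ :=
          real_inner_le_norm _ _
      _ ≤ a / 2 * ‖x - xstar‖ * ‖x - xstar‖ := by gcongr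
      _ = a / 2 * ‖x - xstar‖ ^ 2 := by ring
  have h3 := hneg (x - xstar)
  nlinarith [h2, h3]

/-- The flow is trapped at critical points. -/
lemma flow_const_of_crit {x₀ : Euc d} {γ : ℝ → Euc d} (hγ : IsGradFlow f x₀ γ)
    {L : ℝ} (hL : 0 ≤ L)
    (hlip : ∀ x y : Euc d, ‖gradient f x - gradient f y‖ ≤ L * ‖x - y‖)
    {t₀ : ℝ} (ht₀ : 0 ≤ t₀) (h0 : gradient f (γ t₀) = 0) {s : ℝ} (hs : t₀ ≤ s) :
    γ s = γ t₀ := by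
  have hcont : ContinuousOn γ (Icc t₀ s) := fun t ht =>
    ((hγ.2 t (mem_Ici.2 (le_trans ht₀ ht.1))).continuousWithinAt).mono
      (fun z hz => le_trans ht₀ hz.1)
  have hder : ∀ t ∈ Ico t₀ s,
      HasDerivWithinAt (fun t => γ t - γ t₀) (gradient f (γ t)) (Ici t) t := by
    intro t ht
    exact ((hγ.2 t (mem_Ici.2 (le_trans ht₀ ht.1))).mono
      (Ici_subset_Ici.2 (le_trans ht₀ ht.1))).sub_const _
  have hbound : ∀ t ∈ Ico t₀ s, ‖gradient f (γ t)‖ ≤ L * ‖γ t - γ t₀‖ + 0 := by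
    intro t ht
    rw [add_zero]
    calc ‖gradient f (γ t)‖ = ‖gradient f (γ t) - gradient f (γ t₀)‖ := by rw [h0, sub_zero]
      _ ≤ L * ‖γ t - γ t₀‖ := hlip _ _
  have := norm_le_gronwallBound_of_norm_deriv_right_le
    (f := fun t => γ t - γ t₀) (f' := fun t => gradient f (γ t)) (δ := 0) (K := L) (ε := 0)
    (a := t₀) (b := s) (hcont.sub continuousOn_const) hder (by simp) hbound
  have h2 := this s (right_mem_Icc.2 hs)
  rw [gronwallBound_ε0_δ0] at h2
  have : ‖γ s - γ t₀‖ ≤ 0 := h2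
  rw [← sub_eq_zero]
  exact norm_le_zero_iff.1 this

/-- Speed bound along the flow. -/
lemma flow_dist_le {x₀ : Euc d} {γ : ℝ → Euc d} (hγ : IsGradFlow f x₀ γ)
    {M : ℝ} (hM : ∀ z, ‖gradient f z‖ ≤ M) {t s : ℝ} (ht : 0 ≤ t) (hts : t ≤ s) :
    ‖γ s - γ t‖ ≤ M * (s - t) := by
  have hder : ∀ u ∈ Icc t s, HasDerivWithinAt γ (gradient f (γ u)) (Icc t s) u := by
    intro u hu
    exact (hγ.2 u (mem_Ici.2 (le_trans ht hu.1))).mono (fun z hz => le_trans ht hz.1)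
  exact norm_image_sub_le_of_norm_deriv_le_segment' hder
    (fun u _ => hM _) s (right_mem_Icc.2 hts)
end Aux


set_option maxHeartbeats 4000000 in
/-- Line Search Shift is consistent: started in the basin of attraction of a
mode `x⋆`, for `ρ` small enough every Line Search Shift sequence converges to `x⋆`. Moreover,
if `κ₂ ρ ≤ 1/2`, then until a critical point is reached the shifts satisfy
`(ρ/2)‖∇f(x_k)‖ ≤ ‖x_{k+1} − x_k‖ ≤ ρ κ₁`. -/
theorem lineSearchShift_consistent
    {d : ℕ} (hd : 0 < d) (f : Euc d → ℝ) (hf : IsNiceDensity f)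
    (xstar : Euc d) (hmode : IsLocalMax f xstar)
    (x₀ : Euc d) (γ : ℝ → Euc d) (hγ : IsGradFlow f x₀ γ)
    (hbasin : Tendsto γ atTop (𝓝 xstar)) :
    (∃ ρ₀ > (0:ℝ), ∀ ρ, 0 < ρ → ρ ≤ ρ₀ →
      ∀ x : ℕ → Euc d, IsLineSearchShiftSeq f ρ x₀ x →
        Tendsto x atTop (𝓝 xstar)) ∧
    (∀ ρ : ℝ, 0 < ρ → (⨆ z : Euc d, ‖hess f z‖) * ρ ≤ 1 / 2 →
      ∀ y₀ : Euc d, ∀ x : ℕ → Euc d, IsLineSearchShiftSeq f ρ y₀ x →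
        ∀ k : ℕ, (∀ m, m ≤ k → gradient f (x m) ≠ 0) →
          (ρ / 2) * ‖gradient f (x k)‖ ≤ ‖x (k+1) - x k‖ ∧
          ‖x (k+1) - x k‖ ≤ ρ * (⨆ z : Euc d, ‖gradient f z‖)) := by
  obtain ⟨hf0, hint, hcoco, hdf, hdg, hMf, ⟨M₁, hM₁⟩, ⟨M₂, hM₂⟩, hucf, hucg, huch, hmorse⟩ := hf
  have hM₁0 : 0 ≤ M₁ := le_trans (norm_nonneg _) (hM₁ xstar)
  set κ₂ : ℝ := ⨆ z : Euc d, ‖hess f z‖ with hκ₂def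
  have hbdd2 : BddAbove (Set.range fun z : Euc d => ‖hess f z‖) :=
    ⟨M₂, by rintro _ ⟨z, rfl⟩; exact hM₂ z⟩
  have hLz : ∀ z, ‖hess f z‖ ≤ κ₂ := fun z => le_ciSup hbdd2 z
  have hL0 : 0 ≤ κ₂ := le_trans (norm_nonneg _) (hLz xstar)
  have hlip : ∀ x y : Euc d, ‖gradient f x - gradient f y‖ ≤ κ₂ * ‖x - y‖ :=
    grad_lipschitz hdg hL0 hLz
  set κ₁ : ℝ := ⨆ z : Euc d, ‖gradient f z‖ with hκ₁def
  have hbdd1 : BddAbove (Set.range fun z : Euc d => ‖gradient f z‖) :=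
    ⟨M₁, by rintro _ ⟨z, rfl⟩; exact hM₁ z⟩
  have hgz : ∀ z, ‖gradient f z‖ ≤ κ₁ := fun z => le_ciSup hbdd1 z
  constructor
  · -- PART 1 : consistency
    have hgstar : gradient f xstar = 0 := gradient_eq_zero_of_localMax hmode
    have hHcont : Continuous (hess f) := huch.continuous
    have hsymm := hess_symm hdf hdg xstar
    have hnonpos := hess_nonpos_at_max hdf hdg hmode
    obtain ⟨a, ha, hneg⟩ := exists_negdef hd hsymm hnonpos (hmorse xstar hgstar)
    obtain ⟨r, hr, hconc⟩ := exists_concave_ball hdg hgstar hHcont ha hneg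
    have hκ₂pos : 0 < κ₂ := by
      have hHne : hess f xstar ≠ 0 := by
        intro h0
        have h1 := hneg (EuclideanSpace.single ⟨0, hd⟩ (1:ℝ))
        rw [h0] at h1
        simp [EuclideanSpace.norm_single] at h1
        linarith
      exact lt_of_lt_of_le (norm_pos_iff.2 hHne) (hLz xstar)
    have hgle : ∀ x' : Euc d, ‖gradient f x'‖ ≤ κ₂ * ‖x' - xstar‖ := fun x' => by
      simpa [hgstar] using hlip x' xstar
    -- contraction of one ascent step inside the ball
    have hcontract : ∀ x' ∈ closedBall xstar r, ∀ s : ℝ, 0 ≤ s → s * κ₂ ^ 2 ≤ a / 2 →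
        ‖x' + s • gradient f x' - xstar‖ ^ 2 ≤ (1 - s * a / 2) * ‖x' - xstar‖ ^ 2 := by
      intro x' hx' s hs0 hsκ
      have hre : x' + s • gradient f x' - xstar = (x' - xstar) + s • gradient f x' := by abel
      rw [hre, norm_add_sq_real]
      have hinner : ⟪x' - xstar, s • gradient f x'⟫ = s * ⟪gradient f x', x' - xstar⟫ := by
        rw [real_inner_smul_right, real_inner_comm]
      have hconc' := hconc x' hx'
      have hgb := hgle x'
      have h2 : ‖gradient f x'‖ ^ 2 ≤ κ₂ ^ 2 * ‖x' - xstar‖ ^ 2 := by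
        nlinarith [hgb, norm_nonneg (gradient f x'), norm_nonneg (x' - xstar), hL0]
      have hns : ‖s • gradient f x'‖ ^ 2 = s ^ 2 * ‖gradient f x'‖ ^ 2 := by
        rw [norm_smul, Real.norm_eq_abs, mul_pow, sq_abs]
      have h3 : s ^ 2 * ‖gradient f x'‖ ^ 2 ≤ s * (a / 2) * ‖x' - xstar‖ ^ 2 := by
        calc s ^ 2 * ‖gradient f x'‖ ^ 2 ≤ s ^ 2 * (κ₂ ^ 2 * ‖x' - xstar‖ ^ 2) :=
              mul_le_mul_of_nonneg_left h2 (sq_nonneg s)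
          _ = (s * κ₂ ^ 2) * (s * ‖x' - xstar‖ ^ 2) := by ring
          _ ≤ (a / 2) * (s * ‖x' - xstar‖ ^ 2) :=
              mul_le_mul_of_nonneg_right hsκ (mul_nonneg hs0 (sq_nonneg _))
          _ = s * (a / 2) * ‖x' - xstar‖ ^ 2 := by ring
      have h1 := mul_le_mul_of_nonneg_left hconc' hs0
      rw [hinner, hns]
      nlinarith [h1, h3]
    -- time horizon for the flow
    have hbas := Metric.tendsto_nhds.1 hbasin (r/8) (by positivity)
    obtain ⟨T₀, hT₀⟩ := eventually_atTop.1 hbas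
    set T : ℝ := max T₀ 0 with hTdef
    have hT0 : 0 ≤ T := le_max_right _ _
    have hTprop : ∀ t, T ≤ t → dist (γ t) xstar < r/8 := fun t ht =>
      hT₀ t (le_trans (le_max_left _ _) ht)
    have hγc : ContinuousOn γ (Icc 0 T) := fun t ht =>
      ((hγ.2 t (mem_Ici.2 ht.1)).continuousWithinAt).mono (fun z hz => hz.1)
    set K : Set (Euc d) := (γ '' Icc 0 T) \ ball xstar (r/8) with hKdef
    have hKcomp : IsCompact K := (isCompact_Icc.image_of_continuousOn hγc).diff isOpen_ball
    have hKcrit : ∀ y ∈ K, gradient f y ≠ 0 := by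
      rintro y ⟨⟨t, ht, rfl⟩, hy2⟩ h0
      have hconst : Tendsto γ atTop (𝓝 (γ t)) := by
        apply Tendsto.congr' _ tendsto_const_nhds
        filter_upwards [eventually_ge_atTop t] with s hs
        exact (flow_const_of_crit hγ hL0 hlip ht.1 h0 hs).symm
      have heq : γ t = xstar := tendsto_nhds_unique hconst hbasin
      apply hy2
      rw [heq]
      exact mem_ball_self (by positivity)
    obtain ⟨δ, hδpos, ε₁, hε₁pos, hnear⟩ : ∃ δ > (0:ℝ), ∃ ε₁ > (0:ℝ),
        ∀ y z : Euc d, z ∈ K → dist y z < ε₁ → δ ≤ ‖gradient f y‖ := by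
      rcases K.eq_empty_or_nonempty with hK | hK
      · exact ⟨1, one_pos, 1, one_pos, fun y z hz _ => absurd hz (by simp [hK])⟩
      · have hgcont : Continuous (gradient f) := hucg.continuous
        obtain ⟨z₀, hz₀K, hz₀min⟩ := hKcomp.exists_isMinOn hK hgcont.norm.continuousOn
        have hδ' : 0 < ‖gradient f z₀‖ := norm_pos_iff.2 (hKcrit z₀ hz₀K)
        obtain ⟨ε₁, hε₁, hcl⟩ := Metric.uniformContinuous_iff.1 hucg
          (‖gradient f z₀‖/2) (by positivity)
        refine ⟨‖gradient f z₀‖/2, by positivity, ε₁, hε₁, fun y z hz hyz => ?_⟩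
        have h1 : dist (gradient f y) (gradient f z) < ‖gradient f z₀‖/2 := hcl hyz
        have h2 : ‖gradient f z₀‖ ≤ ‖gradient f z‖ := hz₀min hz
        have h3 := norm_sub_norm_le (gradient f y) (gradient f z)
        rw [← dist_eq_norm] at h3
        linarith [abs_le.1 (abs_norm_sub_norm_le (gradient f y) (gradient f z)), h1, h2,
          (dist_eq_norm (gradient f y) (gradient f z)) ▸ h1]
    set C : ℝ := (Real.exp (κ₂ * (T + 1)) - 1) * M₁ with hCdef
    have hC0 : 0 ≤ C :=
      mul_nonneg (sub_nonneg.2 (Real.one_le_exp (by positivity))) hM₁0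
    refine ⟨min (min (1/(2*κ₂)) (a/(2*κ₂^2))) (min (1/(a+1)) (min 1 (min (ε₁/(2*(C+1)))
      (r/(8*(C+1)))))), by positivity, ?_⟩
    intro ρ hρ hρle x hseq
    -- unpack the bounds on ρ
    have hρ1 : κ₂ * ρ ≤ 1/2 := by
      have h := le_trans hρle (le_trans (min_le_left _ _) (min_le_left _ _))
      rw [le_div_iff₀ (by positivity)] at h
      linarith
    have hρ2 : ρ * κ₂^2 ≤ a/2 := by
      have h := le_trans hρle (le_trans (min_le_left _ _) (min_le_right _ _))
      rw [le_div_iff₀ (by positivity)] at h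
      linarith
    have hρ3 : ρ * a ≤ 1 := by
      have h := le_trans hρle (le_trans (min_le_right _ _) (min_le_left _ _))
      rw [le_div_iff₀ (by positivity)] at h
      nlinarith [hρ.le]
    have hρ4 : ρ ≤ 1 := le_trans hρle (le_trans (min_le_right _ _)
      (le_trans (min_le_right _ _) (min_le_left _ _)))
    have hρ5 : C * ρ ≤ ε₁/2 := by
      have h := le_trans hρle (le_trans (min_le_right _ _)
        (le_trans (min_le_right _ _) (le_trans (min_le_right _ _) (min_le_left _ _))))
      rw [le_div_iff₀ (by positivity)] at h
      nlinarith [hρ.le]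
    have hρ6 : C * ρ ≤ r/8 := by
      have h := le_trans hρle (le_trans (min_le_right _ _)
        (le_trans (min_le_right _ _) (le_trans (min_le_right _ _) (min_le_right _ _))))
      rw [le_div_iff₀ (by positivity)] at h
      nlinarith [hρ.le]
    choose ρk hρkmem hρkstep hρkmax using hseq.2
    have steplow : ∀ k, gradient f (x k) ≠ 0 → ρ/2 ≤ ρk k := by
      intro k hg
      refine stepsize_ge hdf hdg hL0 hLz hρ (hρkmem k) hρ1 hg ?_
      have := hρkmax k ρ ⟨hρ.le, le_rfl⟩
      rwa [hρkstep k] at this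
    set t : ℕ → ℝ := fun k => ∑ j ∈ Finset.range k, ρk j with htdef
    have ht0 : t 0 = 0 := Finset.sum_range_zero _
    have htsucc : ∀ k, t (k+1) = t k + ρk k := fun k => Finset.sum_range_succ _ _
    have htnn : ∀ k, 0 ≤ t k := fun k =>
      Finset.sum_nonneg (fun j _ => (hρkmem j).1)
    -- the tracking invariant
    have hinv : ∀ k : ℕ, (∃ j ≤ k, x j ∈ closedBall xstar r) ∨
        (t k ≤ T ∧ dist (x k) (γ (t k)) ≤ (Real.exp (κ₂ * t k) - 1) * (M₁ * ρ) ∧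
          (ρ/2) * k ≤ t k) := by
      intro k
      induction k with
      | zero =>
        right
        refine ⟨by rw [ht0]; exact hT0, ?_, by simp [ht0]⟩
        rw [ht0, hseq.1, hγ.1]
        simp
      | succ k ih =>
        rcases ih with ⟨j, hj, hjball⟩ | ⟨htk, hek, hprog⟩
        · exact Or.inl ⟨j, Nat.le_succ_of_le hj, hjball⟩
        by_cases hxk : x k ∈ closedBall xstar r
        · exact Or.inl ⟨k, Nat.le_succ k, hxk⟩
        have hx_far : r < dist (x k) xstar := not_le.1 (fun h => hxk (mem_closedBall.2 h))
        have hCρ : (Real.exp (κ₂ * t k) - 1) * (M₁ * ρ) ≤ C * ρ := by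
          have hmono : Real.exp (κ₂ * t k) ≤ Real.exp (κ₂ * (T + 1)) :=
            Real.exp_le_exp.2 (mul_le_mul_of_nonneg_left (by linarith) hL0)
          rw [hCdef]
          have hkey := mul_le_mul_of_nonneg_right
            (mul_le_mul_of_nonneg_right (sub_le_sub_right hmono (1:ℝ)) hM₁0) hρ.le
          linarith [hkey]
        have hek' : dist (x k) (γ (t k)) ≤ C * ρ := le_trans hek hCρ
        have hγtkK : γ (t k) ∈ K := by
          refine ⟨⟨t k, ⟨htnn k, htk⟩, rfl⟩, fun hb => ?_⟩
          have hb' : dist (γ (t k)) xstar < r/8 := mem_ball.1 hb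
          have := dist_triangle (x k) (γ (t k)) xstar
          linarith [hek', hρ6, hx_far, hb', hr.le, this]
        have hgx : δ ≤ ‖gradient f (x k)‖ := by
          refine hnear (x k) (γ (t k)) hγtkK ?_
          calc dist (x k) (γ (t k)) ≤ C * ρ := hek'
            _ ≤ ε₁/2 := hρ5
            _ < ε₁ := by linarith
        have hgne : gradient f (x k) ≠ 0 := by
          intro h0
          rw [h0] at hgx
          simp at hgx
          linarith
        have hsl := steplow k hgne
        have hs0 : 0 ≤ ρk k := (hρkmem k).1
        have hsρ : ρk k ≤ ρ := (hρkmem k).2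
        -- one-step tracking recurrence
        have hrec : dist (x (k+1)) (γ (t (k+1))) ≤
            dist (x k) (γ (t k)) * (1 + κ₂ * ρk k) + κ₂ * M₁ * ρ * ρk k := by
          set s := ρk k with hsdef
          set I : Set ℝ := Icc (t k) (t k + s) with hIdef
          have hIsub : ∀ z ∈ I, (0:ℝ) ≤ z := fun z hz => le_trans (htnn k) hz.1
          have hseg : ∀ u ∈ I, HasDerivWithinAt γ (gradient f (γ u)) I u := fun u hu =>
            (hγ.2 u (mem_Ici.2 (hIsub u hu))).mono (fun z hz => mem_Ici.2 (hIsub z hz))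
          have hflowdist : ∀ u ∈ I, ‖γ u - γ (t k)‖ ≤ M₁ * (u - t k) :=
            norm_image_sub_le_of_norm_deriv_le_segment' hseg (fun u _ => hM₁ _)
          have hderAux : ∀ u ∈ I, HasDerivWithinAt
              (fun u : ℝ => γ u - u • gradient f (x k))
              (gradient f (γ u) - gradient f (x k)) I u := by
            intro u hu
            have hlin : HasDerivWithinAt (fun u : ℝ => u • gradient f (x k))
                (gradient f (x k)) I u := by
              simpa using ((hasDerivAt_id u).smul_const (gradient f (x k))).hasDerivWithinAt
            exact (hseg u hu).sub hlin
          have hbnd : ∀ u ∈ Ico (t k) (t k + s),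
              ‖gradient f (γ u) - gradient f (x k)‖
                ≤ κ₂ * (M₁ * ρ + dist (x k) (γ (t k))) := by
            intro u hu
            have h1 : ‖gradient f (γ u) - gradient f (x k)‖ ≤ κ₂ * ‖γ u - x k‖ := hlip _ _
            have h2 : ‖γ u - x k‖ ≤ ‖γ u - γ (t k)‖ + ‖γ (t k) - x k‖ := by
              have := norm_sub_le_norm_sub_add_norm_sub (γ u) (γ (t k)) (x k)
              linarith [this]
            have h3 : ‖γ u - γ (t k)‖ ≤ M₁ * (u - t k) :=
              hflowdist u ⟨hu.1, hu.2.le⟩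
            have h4 : u - t k ≤ ρ := by
              have := hu.2
              linarith [hsρ]
            have h5 : ‖γ (t k) - x k‖ = dist (x k) (γ (t k)) := by
              rw [dist_eq_norm, norm_sub_rev]
            calc ‖gradient f (γ u) - gradient f (x k)‖ ≤ κ₂ * ‖γ u - x k‖ := h1
              _ ≤ κ₂ * (M₁ * (u - t k) + dist (x k) (γ (t k))) := by
                  rw [← h5]
                  exact mul_le_mul_of_nonneg_left (by linarith) hL0
              _ ≤ κ₂ * (M₁ * ρ + dist (x k) (γ (t k))) := by
                  apply mul_le_mul_of_nonneg_left _ hL0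
                  have : M₁ * (u - t k) ≤ M₁ * ρ := mul_le_mul_of_nonneg_left h4 hM₁0
                  linarith
          have hmvt2 := norm_image_sub_le_of_norm_deriv_le_segment' hderAux hbnd
            (t k + s) (right_mem_Icc.2 (by linarith))
          have hlhs : (γ (t k + s) - (t k + s) • gradient f (x k))
              - (γ (t k) - t k • gradient f (x k))
              = γ (t k + s) - γ (t k) - s • gradient f (x k) := by
            rw [add_smul]; abel
          rw [hlhs, add_sub_cancel_left] at hmvt2
          have hfin : dist (x (k+1)) (γ (t (k+1)))
              ≤ dist (x k) (γ (t k)) + κ₂ * (M₁ * ρ + dist (x k) (γ (t k))) * s := by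
            rw [htsucc, hρkstep, dist_eq_norm]
            have hsplit : x k + s • gradient f (x k) - γ (t k + s)
                = (x k - γ (t k)) - (γ (t k + s) - γ (t k) - s • gradient f (x k)) := by
              abel
            rw [hsplit]
            calc ‖(x k - γ (t k)) - (γ (t k + s) - γ (t k) - s • gradient f (x k))‖
                ≤ ‖x k - γ (t k)‖ + ‖γ (t k + s) - γ (t k) - s • gradient f (x k)‖ :=
                  norm_sub_le _ _
              _ ≤ dist (x k) (γ (t k)) + κ₂ * (M₁ * ρ + dist (x k) (γ (t k))) * s := by
                  rw [← dist_eq_norm]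
                  gcongr
            -- done
          calc dist (x (k+1)) (γ (t (k+1)))
              ≤ dist (x k) (γ (t k)) + κ₂ * (M₁ * ρ + dist (x k) (γ (t k))) * s := hfin
            _ = dist (x k) (γ (t k)) * (1 + κ₂ * s) + κ₂ * M₁ * ρ * s := by ring
        -- the exponential bound propagates
        have hexp : dist (x (k+1)) (γ (t (k+1)))
            ≤ (Real.exp (κ₂ * t (k+1)) - 1) * (M₁ * ρ) := by
          set s := ρk k with hsdef
          set E := Real.exp (κ₂ * t k) with hEdef
          have hE1 : 1 ≤ E := Real.one_le_exp (mul_nonneg hL0 (htnn k))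
          have h1 : 1 + κ₂ * s ≤ Real.exp (κ₂ * s) := by
            have := Real.add_one_le_exp (κ₂ * s)
            linarith
          have hκs : 0 ≤ κ₂ * s := mul_nonneg hL0 hs0
          calc dist (x (k+1)) (γ (t (k+1)))
              ≤ dist (x k) (γ (t k)) * (1 + κ₂ * s) + κ₂ * M₁ * ρ * s := hrec
            _ ≤ ((E - 1) * (M₁ * ρ)) * (1 + κ₂ * s) + κ₂ * M₁ * ρ * s := by
                have h0 : (0:ℝ) ≤ 1 + κ₂ * s := by linarith
                nlinarith [mul_le_mul_of_nonneg_right hek h0]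
            _ = (M₁ * ρ) * (E * (1 + κ₂ * s) - 1) := by ring
            _ ≤ (M₁ * ρ) * (E * Real.exp (κ₂ * s) - 1) := by
                have hEs : E * (1 + κ₂ * s) ≤ E * Real.exp (κ₂ * s) :=
                  mul_le_mul_of_nonneg_left h1 (by positivity)
                have : (0:ℝ) ≤ M₁ * ρ := mul_nonneg hM₁0 hρ.le
                nlinarith [this, hEs]
            _ = (Real.exp (κ₂ * t (k+1)) - 1) * (M₁ * ρ) := by
                rw [htsucc, mul_add, Real.exp_add, ← hEdef]
                ring
        by_cases hT : t (k+1) ≤ T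
        · right
          refine ⟨hT, hexp, ?_⟩
          rw [htsucc]
          push_cast
          linarith [hprog, hsl]
        · left
          refine ⟨k+1, le_rfl, ?_⟩
          push_neg at hT
          have h1 : t (k+1) ≤ T + 1 := by
            rw [htsucc]
            linarith [hsρ, hρ4, htk]
          have h2 : dist (x (k+1)) (γ (t (k+1))) ≤ C * ρ := by
            refine le_trans hexp ?_
            have hmono : Real.exp (κ₂ * t (k+1)) ≤ Real.exp (κ₂ * (T + 1)) :=
              Real.exp_le_exp.2 (mul_le_mul_of_nonneg_left h1 hL0)
            rw [hCdef]
            have hkey := mul_le_mul_of_nonneg_right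
              (mul_le_mul_of_nonneg_right (sub_le_sub_right hmono (1:ℝ)) hM₁0) hρ.le
            linarith [hkey]
          have h3 : dist (γ (t (k+1))) xstar < r/8 := hTprop _ hT.le
          have := dist_triangle (x (k+1)) (γ (t (k+1))) xstar
          rw [mem_closedBall]
          linarith [h2, hρ6, h3, this, hr.le]
    -- the sequence reaches the ball
    obtain ⟨N, hNball⟩ : ∃ N, x N ∈ closedBall xstar r := by
      set k₁ : ℕ := Nat.floor (2 * T / ρ) + 1 with hk₁def
      rcases hinv k₁ with ⟨j, _, hj⟩ | ⟨htk, _, hprog⟩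
      · exact ⟨j, hj⟩
      · exfalso
        have hfl : (2 * T / ρ : ℝ) < k₁ := by
          rw [hk₁def]
          push_cast
          exact Nat.lt_floor_add_one _
        have : T < ρ/2 * k₁ := by
          rw [div_lt_iff₀ hρ] at hfl
          nlinarith [hfl]
        linarith [hprog, htk]
    -- geometric convergence inside the ball
    have hq0 : (0:ℝ) ≤ 1 - ρ * a / 4 := by nlinarith [hρ3]
    have hq1 : 1 - ρ * a / 4 < 1 := by nlinarith [hρ, ha]
    have hball_step : ∀ m, x m ∈ closedBall xstar r →
        dist (x (m+1)) xstar ^ 2 ≤ (1 - ρ * a / 4) * dist (x m) xstar ^ 2 ∧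
          x (m+1) ∈ closedBall xstar r := by
      intro m hm
      by_cases hg : gradient f (x m) = 0
      · have hxm : x m = xstar := by
          have h1 := hconc (x m) hm
          rw [hg] at h1
          simp only [inner_zero_left] at h1
          have h2 : ‖x m - xstar‖ ^ 2 ≤ 0 := by nlinarith [h1, ha]
          have h3 : ‖x m - xstar‖ = 0 := by
            nlinarith [norm_nonneg (x m - xstar), h2]
          rw [← sub_eq_zero]
          exact norm_eq_zero.1 h3
        have hnext : x (m+1) = xstar := by
          rw [hρkstep m, hg, smul_zero, add_zero, hxm]
        rw [hnext, hxm]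
        simp [hr.le, mem_closedBall_self]
      · have hsl := steplow m hg
        have hcon := hcontract (x m) hm (ρk m) (hρkmem m).1
          (by linarith [mul_le_mul_of_nonneg_right (hρkmem m).2 (sq_nonneg κ₂), hρ2])
        have hd1 : dist (x (m+1)) xstar = ‖x m + ρk m • gradient f (x m) - xstar‖ := by
          rw [hρkstep m, dist_eq_norm]
        have hd0 : dist (x m) xstar = ‖x m - xstar‖ := dist_eq_norm _ _
        constructor
        · rw [hd1, hd0]
          calc ‖x m + ρk m • gradient f (x m) - xstar‖ ^ 2
              ≤ (1 - ρk m * a / 2) * ‖x m - xstar‖ ^ 2 := hcon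
            _ ≤ (1 - ρ * a / 4) * ‖x m - xstar‖ ^ 2 := by
                apply mul_le_mul_of_nonneg_right _ (sq_nonneg _)
                nlinarith [hsl, ha]
        · rw [mem_closedBall]
          have hmr : dist (x m) xstar ≤ r := mem_closedBall.1 hm
          have := hcon
          rw [← hd1, ← hd0] at this
          have hf0 : ρk m * a ≤ 1 := by
            have := mul_le_mul_of_nonneg_right (hρkmem m).2 ha.le
            linarith [hρ3]
          have hf1 : (1 - ρk m * a / 2) ≤ 1 := by
            have := mul_nonneg ((hρkmem m).1) ha.le
            linarith
          have hsq : dist (x (m+1)) xstar ^ 2 ≤ r ^ 2 := by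
            have hA := mul_le_mul_of_nonneg_right hf1 (sq_nonneg (dist (x m) xstar))
            have hB : dist (x m) xstar ^ 2 ≤ r ^ 2 := pow_le_pow_left₀ dist_nonneg hmr 2
            nlinarith [this, hA, hB]
          nlinarith [hsq, dist_nonneg (x := x (m+1)) (y := xstar), hr.le]
    have hGeo : ∀ n : ℕ, x (N + n) ∈ closedBall xstar r ∧
        dist (x (N + n)) xstar ^ 2 ≤ (1 - ρ * a / 4) ^ n * r ^ 2 := by
      intro n
      induction n with
      | zero =>
        refine ⟨hNball, ?_⟩
        simpa using pow_le_pow_left₀ dist_nonneg (mem_closedBall.1 hNball) 2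
      | succ n ih =>
        have hstep := hball_step (N + n) ih.1
        refine ⟨hstep.2, ?_⟩
        calc dist (x (N + (n+1))) xstar ^ 2
            ≤ (1 - ρ * a / 4) * dist (x (N + n)) xstar ^ 2 := hstep.1
          _ ≤ (1 - ρ * a / 4) * ((1 - ρ * a / 4) ^ n * r ^ 2) :=
              mul_le_mul_of_nonneg_left ih.2 hq0
          _ = (1 - ρ * a / 4) ^ (n+1) * r ^ 2 := by ring
    have htend0 : Tendsto (fun n : ℕ => (1 - ρ * a / 4) ^ n * r ^ 2) atTop (𝓝 0) := by
      have h := tendsto_pow_atTop_nhds_zero_of_lt_one hq0 hq1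
      simpa using h.mul_const (r ^ 2)
    have hd2 : Tendsto (fun n : ℕ => dist (x (N + n)) xstar ^ 2) atTop (𝓝 0) :=
      squeeze_zero (fun n => sq_nonneg _) (fun n => (hGeo n).2) htend0
    have hd1 : Tendsto (fun n : ℕ => dist (x (N + n)) xstar) atTop (𝓝 0) := by
      have h := (Real.continuous_sqrt.tendsto 0).comp hd2
      rw [Real.sqrt_zero] at h
      refine h.congr fun n => ?_
      exact Real.sqrt_sq dist_nonneg
    rw [tendsto_iff_dist_tendsto_zero]
    have hd1' : Tendsto (fun n : ℕ => dist (x (n + N)) xstar) atTop (𝓝 0) := by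
      simpa [Nat.add_comm] using hd1
    exact (tendsto_add_atTop_iff_nat N).1 hd1'
  · -- PART 2 : step size bounds
    intro ρ hρ hκρ y₀ x hseq k hcrit
    obtain ⟨s, hsmem, hstep, hmax⟩ := hseq.2 k
    have hxx : x (k+1) - x k = s • gradient f (x k) := by
      rw [hstep]; abel
    have hnorm : ‖x (k+1) - x k‖ = s * ‖gradient f (x k)‖ := by
      rw [hxx, norm_smul, Real.norm_eq_abs, abs_of_nonneg hsmem.1]
    have hs2 : ρ/2 ≤ s := by
      refine stepsize_ge hdf hdg hL0 hLz hρ hsmem hκρ (hcrit k le_rfl) ?_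
      have := hmax ρ ⟨hρ.le, le_rfl⟩
      rwa [hstep] at this
    constructor
    · rw [hnorm]
      exact mul_le_mul_of_nonneg_right hs2 (norm_nonneg _)
    · rw [hnorm]
      exact mul_le_mul hsmem.2 (hgz _) (norm_nonneg _) hρ.le
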